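/- Let T be a monad on Sets and (a : TX → X) an algebra with a basis b : X → TX (a T̄-coalgebra). Let e : X_b ↪ X be the equalizer of b and η_X, and suppose X_b is nonempty. Then the induced algebra map a ∘ T(e) : T(X_b) → X is an isomorphism of T-algebras; in particular, any Set-based algebra with a nonempty basis is free. -/

import Mathlib

open CategoryTheory

/-- For a monad `T` on `Sets` and an algebra `(a : TX → X)` with a basis
`b : X → TX` (a `T̄`-coalgebra), if the equalizer `X_b = {x | b x = η x}` of `b` and `η`
is nonempty, then the adjoint transpose `a ∘ T(e) : T(X_b) → X` of the inclusion
`e : X_b ↪ X` is an isomorphism of `T`-algebras; in particular any set-based algebra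
with a nonempty basis is free. -/
theorem bases_as_coalgebras_stmt4 (T : Monad (Type u)) (X : T.Algebra)
    (b : X.A ⟶ T.obj X.A)
    (h1 : X.a ≫ b = T.map b ≫ T.μ.app X.A)
    (h2 : b ≫ X.a = 𝟙 X.A)
    (h3 : b ≫ T.map (T.η.app X.A) = b ≫ T.map b)
    (hne : Nonempty {x : X.A // b x = T.η.app X.A x}) :
    IsIso ((T.adj.homEquiv {x : X.A // b x = T.η.app X.A x} X).symm
      (TypeCat.ofHom (fun x => x.1))) := by
  classical
  obtain ⟨e0⟩ := hne
  set E : Type u := {x : X.A // b x = T.η.app X.A x} with hE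
  let e : E ⟶ X.A := TypeCat.ofHom (fun x => x.1)
  let s : X.A ⟶ E := TypeCat.ofHom (fun x => if h : b x = T.η.app X.A x then ⟨x, h⟩ else e0)
  let t : T.obj X.A ⟶ X.A := TypeCat.ofHom (fun y => if h : ∃ x : X.A, b x = y then h.choose else e0.1)
  -- b is injective
  have hbinj : Function.Injective b := by
    intro x y hxy
    have hx := ConcreteCategory.congr_hom h2 x
    have hy := ConcreteCategory.congr_hom h2 y
    simp only [CategoryTheory.types_comp_apply, CategoryTheory.types_id_apply] at hx hy
    rw [← hx, ← hy, hxy]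
  have hae : ∀ x : X.A, X.a (T.η.app X.A x) = x := by
    intro x
    have := ConcreteCategory.congr_hom X.unit x
    simpa using this
  have hab : ∀ x : X.A, X.a (b x) = x := by
    intro x
    have := ConcreteCategory.congr_hom h2 x
    simpa using this
  -- t ∘ b = id
  have htb : b ≫ t = 𝟙 X.A := by
    ext x
    have hex : ∃ x' : X.A, b x' = b x := ⟨x, rfl⟩
    simp only [TypeCat.Fun.toFun_apply, CategoryTheory.types_comp_apply, CategoryTheory.types_id_apply, t, TypeCat.ofHom_apply]
    rw [dif_pos hex]
    exact hbinj hex.choose_spec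
  -- t ∘ η = e ∘ s
  have hts : T.η.app X.A ≫ t = s ≫ e := by
    ext x
    by_cases hx : b x = T.η.app X.A x
    · have hex : ∃ x' : X.A, b x' = T.η.app X.A x := ⟨x, hx⟩
      simp only [TypeCat.Fun.toFun_apply, CategoryTheory.types_comp_apply, t, s, e, TypeCat.ofHom_apply]
      rw [dif_pos hex, dif_pos hx]
      have := hex.choose_spec
      have : X.a (b hex.choose) = X.a (T.η.app X.A x) := by rw [this]
      rw [hab, hae] at this
      exact this
    · have hex : ¬ ∃ x' : X.A, b x' = T.η.app X.A x := by
        rintro ⟨x', hx'⟩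
        have : X.a (b x') = X.a (T.η.app X.A x) := by rw [hx']
        rw [hab, hae] at this
        subst this
        exact hx hx'
      simp only [TypeCat.Fun.toFun_apply, CategoryTheory.types_comp_apply, t, s, e, TypeCat.ofHom_apply]
      rw [dif_neg hex, dif_neg hx]
  -- s ∘ e = id on E
  have hse : e ≫ s = 𝟙 E := by
    ext x
    simp only [TypeCat.Fun.toFun_apply, CategoryTheory.types_comp_apply, CategoryTheory.types_id_apply, e, s, TypeCat.ofHom_apply]
    rw [dif_pos x.2]
  -- e ∘ b = e ∘ η
  have heb : (e ≫ b : E ⟶ T.obj X.A) = e ≫ T.η.app X.A := by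
    ext x
    exact x.2
  -- the key factorization: b ≫ T(s ≫ e) = b
  have hfactor : b ≫ T.map (s ≫ e) = b := by
    rw [← hts, Functor.map_comp, ← Category.assoc, h3, Category.assoc,
      ← Functor.map_comp, htb]
    simp
  -- the transposed map and its inverse
  let φ : T.free.obj E ⟶ X := (T.adj.homEquiv E X).symm e
  have hφ : φ.f = T.map e ≫ X.a := by
    show ((T.adj.homEquiv E X).symm e).f = T.map e ≫ X.a
    simp [Monad.adj]
    rfl
  let β : X ⟶ T.free.obj E :=
    { f := b ≫ T.map s
      h := by
        show T.map (b ≫ T.map s) ≫ T.μ.app E = X.a ≫ b ≫ T.map s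
        rw [reassoc_of% h1, Functor.map_comp, Category.assoc]
        have := T.μ.naturality s
        simp only [Functor.comp_map] at this
        rw [this] }
  show IsIso φ
  refine ⟨β, ?_, ?_⟩
  · -- φ ≫ β = 𝟙 (free.obj E)
    ext1
    show φ.f ≫ β.f = 𝟙 (T.obj E)
    rw [hφ]
    show (T.map e ≫ X.a) ≫ b ≫ T.map s = 𝟙 (T.obj E)
    rw [Category.assoc, reassoc_of% h1, ← Functor.map_comp_assoc, heb,
      Functor.map_comp_assoc]
    rw [Monad.right_unit_assoc, ← Functor.map_comp, hse]
    simp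
  · -- β ≫ φ = 𝟙 X
    ext1
    show β.f ≫ φ.f = 𝟙 X.A
    rw [hφ]
    show (b ≫ T.map s) ≫ T.map e ≫ X.a = 𝟙 X.A
    rw [Category.assoc, ← Functor.map_comp_assoc]
    rw [← Category.assoc, hfactor, h2]
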